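/- Let f ∈ k[t] be nonconstant, let g_f be a monic polynomial of minimal degree with f'g_f ∈ k[f], and suppose g ∈ k[t] satisfies f'g ∈ k[f]. Then g_f divides g in the sense that g = p(f)·g_f for some p ∈ k[t]; consequently k[f]·g·∂ ⊆ k[f]·g_f·∂. -/

import Mathlib

open Polynomial

lemma stmt4_deriv_deg {k : Type*} [Field k] [CharZero k] {f : k[X]}
    (hf : 1 ≤ f.natDegree) : (derivative f).natDegree = f.natDegree - 1 := by
  refine le_antisymm (natDegree_derivative_le f) (le_natDegree_of_ne_zero ?_)
  rw [coeff_derivative]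
  have h1 : f.natDegree - 1 + 1 = f.natDegree := by omega
  rw [h1]
  have h2 : f.coeff f.natDegree ≠ 0 := by
    intro hz
    exact (fun h => by simp [h] at hf) (leadingCoeff_eq_zero.mp hz)
  have h3 : ((f.natDegree - 1 : ℕ) : k) + 1 ≠ 0 := by
    exact_mod_cast (Nat.cast_ne_zero (R := k)).2 (Nat.succ_ne_zero (f.natDegree - 1))
  exact mul_ne_zero h2 h3

lemma stmt4_deriv_ne {k : Type*} [Field k] [CharZero k] {f : k[X]}
    (hf : 1 ≤ f.natDegree) : derivative f ≠ 0 := by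
  intro h
  have := natDegree_eq_zero_of_derivative_eq_zero h
  omega

/-- The degree equation: if f' * g = h.comp f with g ≠ 0 then
  (n-1) + deg g = deg h * n. -/
lemma stmt4_degeq {k : Type*} [Field k] [CharZero k] {f g h : k[X]}
    (hf : 1 ≤ f.natDegree) (hg : g ≠ 0) (heq : derivative f * g = h.comp f) :
    f.natDegree - 1 + g.natDegree = h.natDegree * f.natDegree := by
  have := congrArg natDegree heq
  rwa [natDegree_mul (stmt4_deriv_ne hf) hg, natDegree_comp, stmt4_deriv_deg hf] at this

/-- minimality applies to any nonzero g with f'g ∈ k[f] after normalizing. -/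
lemma stmt4_min' {k : Type*} [Field k] [CharZero k] {f gf g : k[X]}
    (hmin : ∀ g' : k[X], g'.Monic → (∃ h : k[X], derivative f * g' = h.comp f) →
      gf.natDegree ≤ g'.natDegree)
    (hg0 : g ≠ 0) (hg : ∃ h : k[X], derivative f * g = h.comp f) :
    gf.natDegree ≤ g.natDegree := by
  obtain ⟨h, hh⟩ := hg
  have hc : g.leadingCoeff⁻¹ ≠ 0 := inv_ne_zero (leadingCoeff_ne_zero.2 hg0)
  have := hmin (g * C g.leadingCoeff⁻¹) (monic_mul_leadingCoeff_inv hg0)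
    ⟨h * C g.leadingCoeff⁻¹, by rw [mul_comp, C_comp, ← mul_assoc, hh]⟩
  rwa [natDegree_mul_C hc] at this

lemma stmt4_main {k : Type*} [Field k] [CharZero k] (f gf : k[X])
    (hf : 1 ≤ f.natDegree) (hmonic : gf.Monic)
    (hgf : ∃ h : k[X], derivative f * gf = h.comp f)
    (hmin : ∀ g' : k[X], g'.Monic → (∃ h : k[X], derivative f * g' = h.comp f) →
      gf.natDegree ≤ g'.natDegree) :
    ∀ N : ℕ, ∀ g : k[X], g.natDegree ≤ N → (∃ h : k[X], derivative f * g = h.comp f) →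
      ∃ p : k[X], g = p.comp f * gf := by
  intro N
  induction N with
  | zero =>
    intro g hdeg hg
    by_cases hg0 : g = 0
    · exact ⟨0, by simp [hg0]⟩
    · have hgfdeg : gf.natDegree = 0 := le_antisymm (le_trans (stmt4_min' hmin hg0 hg) hdeg)
        (Nat.zero_le _)
      have hgf1 : gf = 1 := hmonic.natDegree_eq_zero.mp hgfdeg
      have hdeg0 : g.natDegree = 0 := le_antisymm hdeg (Nat.zero_le _)
      refine ⟨C (g.coeff 0), ?_⟩
      rw [hgf1, C_comp, mul_one]
      exact eq_C_of_natDegree_eq_zero hdeg0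
  | succ N ih =>
    intro g hdeg hg
    by_cases hle : g.natDegree ≤ N
    · exact ih g hle hg
    have hdg : g.natDegree = N + 1 := by omega
    have hg0 : g ≠ 0 := by intro h; simp [h] at hdg
    obtain ⟨h, hh⟩ := hg
    obtain ⟨h0, hh0⟩ := hgf
    have e1 := stmt4_degeq hf hg0 hh
    have e2 := stmt4_degeq hf hmonic.ne_zero hh0
    have hge := stmt4_min' hmin hg0 ⟨h, hh⟩
    have hmul : h0.natDegree * f.natDegree ≤ h.natDegree * f.natDegree := by omega
    have hhh0 : h0.natDegree ≤ h.natDegree :=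
      Nat.le_of_mul_le_mul_right hmul (by omega)
    set j := h.natDegree - h0.natDegree with hj
    have hjn : g.natDegree = gf.natDegree + j * f.natDegree := by
      have : j * f.natDegree = h.natDegree * f.natDegree - h0.natDegree * f.natDegree := by
        rw [hj, Nat.sub_mul]
      omega
    set a := f.leadingCoeff with ha
    have ha0 : a ≠ 0 := leadingCoeff_ne_zero.2 (fun hh => by simp [hh] at hf)
    set c := g.leadingCoeff with hc
    have hc0 : c ≠ 0 := leadingCoeff_ne_zero.2 hg0
    set d := c * (a ^ j)⁻¹ with hd
    have hd0 : d ≠ 0 := mul_ne_zero hc0 (inv_ne_zero (pow_ne_zero _ ha0))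
    set m := C d * f ^ j * gf with hm
    have hm0 : m ≠ 0 := mul_ne_zero (mul_ne_zero (by simpa using hd0)
      (pow_ne_zero _ (fun hh => by simp [hh] at hf))) hmonic.ne_zero
    have hmdeg : m.natDegree = g.natDegree := by
      rw [hm, natDegree_mul (mul_ne_zero (by simpa using hd0)
        (pow_ne_zero _ (fun hh => by simp [hh] at hf))) hmonic.ne_zero,
        natDegree_mul (by simpa using hd0) (pow_ne_zero _ (fun hh => by simp [hh] at hf)),
        natDegree_C, natDegree_pow]
      omega
    have hmlc : m.leadingCoeff = c := by
      rw [hm, leadingCoeff_mul, leadingCoeff_mul, leadingCoeff_C, leadingCoeff_pow,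
        hmonic.leadingCoeff, mul_one, hd]
      field_simp
      rfl
    -- g - m has smaller natDegree
    have hsub : (g - m).natDegree ≤ N := by
      by_cases hgm : g - m = 0
      · simp [hgm]
      · have hdlt : (g - m).degree < g.degree := by
          apply degree_sub_lt _ hg0 hmlc.symm
          rw [degree_eq_natDegree hg0, degree_eq_natDegree hm0, hmdeg]
        have := natDegree_lt_natDegree hgm hdlt
        omega
    -- g - m still satisfies the condition
    have hsubcond : ∃ h' : k[X], derivative f * (g - m) = h'.comp f := by
      refine ⟨h - C d * X ^ j * h0, ?_⟩
      have : (C d * X ^ j * h0).comp f = C d * f ^ j * (derivative f * gf) := by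
        rw [mul_comp, mul_comp, C_comp, X_pow_comp, hh0]
      rw [sub_comp, this, hm, mul_sub, hh]; ring
    obtain ⟨p', hp'⟩ := ih (g - m) hsub hsubcond
    refine ⟨p' + C d * X ^ j, ?_⟩
    have hmcomp : (C d * X ^ j).comp f = C d * f ^ j := by
      rw [mul_comp, C_comp, X_pow_comp]
    have : g = (g - m) + m := by ring
    rw [this, hp', add_comp, hmcomp, hm]; ring

/-- If `g_f` is a monic polynomial of minimal degree with `f'g_f ∈ k[f]` and `g`
satisfies `f'g ∈ k[f]`, then `g = p(f)·g_f` for some `p`, and consequently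
`k[f]·g·∂ ⊆ k[f]·g_f·∂`. -/
theorem stmt4 (k : Type*) [Field k] [CharZero k] (f gf g : k[X])
    (hf : 1 ≤ f.natDegree) (hmonic : gf.Monic)
    (hgf : ∃ h : k[X], derivative f * gf = h.comp f)
    (hmin : ∀ g' : k[X], g'.Monic → (∃ h : k[X], derivative f * g' = h.comp f) →
      gf.natDegree ≤ g'.natDegree)
    (hg : ∃ h : k[X], derivative f * g = h.comp f) :
    (∃ p : k[X], g = p.comp f * gf) ∧
      ∀ q : k[X], ∃ r : k[X], q.comp f * g = r.comp f * gf := by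
  obtain ⟨p, hp⟩ := stmt4_main f gf hf hmonic hgf hmin g.natDegree g le_rfl hg
  exact ⟨⟨p, hp⟩, fun q => ⟨q * p, by rw [hp, mul_comp]; ring⟩⟩
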